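/- Let V be a Henselian valuation ring, P a prime ideal of V with quotient map π : V → V/P, and A ⊆ V a subring. Let A' ⊆ V/P be a subring containing π(A), and assume π restricted to A is injective and the field extension Frac(A')/Frac(π(A)) is separably algebraic, with A' = A[x] for x a root of an irreducible separable polynomial g ∈ A[X] (viewing A ⊆ V/P via π). Then there exists x̄ ∈ V with g(x̄) = 0 and π(x̄) = x; consequently the subring A[x̄] ⊆ V maps isomorphically onto A' under π. -/

import Mathlib

open Polynomial
set_option maxHeartbeats 1000000

theorem aux_coprime_eval {A B : Type*} [CommRing A] [IsDomain A] [CommRing B] [IsDomain B]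
    (φ : A →+* B) (hφ : Function.Injective φ) (p q : Polynomial A) (x : B)
    (hco : IsCoprime (p.map (algebraMap A (FractionRing A)))
      (q.map (algebraMap A (FractionRing A))))
    (hp : p.eval₂ φ x = 0) : q.eval₂ φ x ≠ 0 := by
  intro h0
  have hι : Function.Injective (algebraMap B (FractionRing B)) := IsFractionRing.injective B _
  set φ' : A →+* FractionRing B := (algebraMap B (FractionRing B)).comp φ with hφ'def
  have hφ'inj : Function.Injective φ' := hι.comp hφ
  set ψ : FractionRing A →+* FractionRing B := IsFractionRing.lift hφ'inj with hψdef
  have hψ : ψ.comp (algebraMap A (FractionRing A)) = φ' :=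
    RingHom.ext fun a => by rw [RingHom.comp_apply, hψdef]; exact IsFractionRing.lift_algebraMap hφ'inj a
  have key : ∀ r : Polynomial A, r.eval₂ φ x = 0 →
      (r.map (algebraMap A (FractionRing A))).eval₂ ψ (algebraMap B (FractionRing B) x) = 0 := by
    intro r hr
    rw [eval₂_map, hψ, hφ'def, ← hom_eval₂, hr, map_zero]
  obtain ⟨a, b, hab⟩ := hco
  have := congrArg (eval₂ ψ (algebraMap B (FractionRing B) x)) hab
  rw [eval₂_add, eval₂_mul, eval₂_mul, key p hp, key q h0, mul_zero, mul_zero, add_zero,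
    eval₂_one] at this
  exact zero_ne_one this

theorem aux_root_dvd {A B : Type*} [CommRing A] [IsDomain A] [CommRing B] [IsDomain B]
    (φ : A →+* B) (hφ : Function.Injective φ) (g p : Polynomial A)
    (hirr : Irreducible (g.map (algebraMap A (FractionRing A)))) (x : B)
    (hg : g.eval₂ φ x = 0) (hp : p.eval₂ φ x = 0) :
    g.map (algebraMap A (FractionRing A)) ∣ p.map (algebraMap A (FractionRing A)) := by
  rcases hirr.isCoprime_or_dvd (p.map (algebraMap A (FractionRing A))) with hco | hdvd
  · exact absurd hp (aux_coprime_eval φ hφ g p x hco hg)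
  · exact hdvd

theorem aux_eval_zero {A V : Type*} [CommRing A] [IsDomain A] [CommRing V] [IsDomain V]
    (ρ : A →+* V) (hρ : Function.Injective ρ) (g p : Polynomial A)
    (hdvd : g.map (algebraMap A (FractionRing A)) ∣ p.map (algebraMap A (FractionRing A)))
    (x₁ : V) (hg : g.eval₂ ρ x₁ = 0) : p.eval₂ ρ x₁ = 0 := by
  have hj : Function.Injective (algebraMap V (FractionRing V)) := IsFractionRing.injective V _
  set χ : A →+* FractionRing V := (algebraMap V (FractionRing V)).comp ρ with hχdef
  have hχ : Function.Injective χ := hj.comp hρ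
  set θ : FractionRing A →+* FractionRing V := IsFractionRing.lift hχ with hθdef
  have hθ : θ.comp (algebraMap A (FractionRing A)) = χ :=
    RingHom.ext fun a => by rw [RingHom.comp_apply, hθdef]; exact IsFractionRing.lift_algebraMap hχ a
  have key : ∀ r : Polynomial A,
      (r.map (algebraMap A (FractionRing A))).eval₂ θ (algebraMap V (FractionRing V) x₁)
        = algebraMap V (FractionRing V) (r.eval₂ ρ x₁) := by
    intro r
    rw [eval₂_map, hθ, hχdef, ← hom_eval₂]
  obtain ⟨q, hq⟩ := hdvd
  apply hj
  rw [map_zero, ← key, hq, eval₂_mul, key g, hg, map_zero, zero_mul]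


set_option maxHeartbeats 1000000 in
theorem newton_lift {V : Type*} [CommRing V] [IsDomain V] [ValuationRing V]
    [HenselianLocalRing V] (P : Ideal V) (hP : P.IsPrime)
    (G : Polynomial V) (y : V) (hb : G.eval y ∈ P) (he : G.derivative.eval y ∉ P) :
    ∃ z : V, G.eval (y + z) = 0 ∧ z ∈ P := by
  classical
  set b := G.eval y with hbdef
  set e := G.derivative.eval y with hedef
  have he0 : e ≠ 0 := fun h => he (h ▸ P.zero_mem)
  have he2 : e ^ 2 ∉ P := fun h => he (hP.mem_of_pow_mem 2 h)
  obtain ⟨t, ht | ht⟩ := PreValuationRing.cond (e ^ 2) b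
  swap
  · exact absurd (ht ▸ P.mul_mem_right t hb) he2
  have htP : t ∈ P := by
    rcases hP.mem_or_mem (show e ^ 2 * t ∈ P by rw [ht]; exact hb) with h | h
    · exact absurd h he2
    · exact h
  set T := Polynomial.taylor y G with hTdef
  have hT0 : T.coeff 0 = b := Polynomial.taylor_coeff_zero y G
  have hT1 : T.coeff 1 = e := Polynomial.taylor_coeff_one y G
  set n := T.natDegree with hndef
  have hn1 : 1 ≤ n := le_natDegree_of_ne_zero (by rw [hT1]; exact he0)
  set k : Polynomial V :=
    C 1 + X + ∑ i ∈ Finset.Ico 2 (n + 1), C (T.coeff i * e ^ (i - 2) * t ^ (i - 1)) * X ^ i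
    with hkdef
  have hkc : ∀ j, k.coeff j = (if j = 0 then (1 : V) else 0) + (if j = 1 then 1 else 0)
      + (if j ∈ Finset.Ico 2 (n + 1) then T.coeff j * e ^ (j - 2) * t ^ (j - 1) else 0) := by
    intro j
    rw [hkdef]
    rw [coeff_add, coeff_add, finset_sum_coeff]
    congr 1
    · congr 1
      · simp [coeff_one, eq_comm]
      · simp [coeff_X, eq_comm]
    · rw [Finset.sum_congr rfl (fun i _ => by
        rw [coeff_C_mul, coeff_X_pow, mul_ite, mul_one, mul_zero])]
      exact Finset.sum_ite_eq (Finset.Ico 2 (n + 1)) j _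
  have k0 : k.coeff 0 = 1 := by rw [hkc]; norm_num
  have k1 : k.coeff 1 = 1 := by rw [hkc]; norm_num
  have khi : ∀ j, 2 ≤ j → k.coeff j ∈ P := by
    intro j hj
    rw [hkc]
    rw [if_neg (by omega), if_neg (by omega)]
    split_ifs with h
    · have : t ^ (j - 1) ∈ P := by
        have : j - 1 = (j - 2) + 1 := by omega
        rw [this, pow_succ]
        exact P.mul_mem_left _ htP
      simpa using P.mul_mem_left (T.coeff j * e ^ (j - 2)) this
    · simpa using P.zero_mem
  -- key evaluation identity
  have hkey : ∀ z : V, e ^ 2 * t * k.eval z = T.eval (e * t * z) := by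
    intro z
    have hsum : ∀ i ∈ Finset.Ico 2 (n + 1),
        e ^ 2 * t * (T.coeff i * e ^ (i - 2) * t ^ (i - 1) * z ^ i)
          = T.coeff i * (e * t * z) ^ i := by
      intro i hi
      obtain ⟨j, rfl⟩ : ∃ j, i = j + 2 := ⟨i - 2, by have := (Finset.mem_Ico.mp hi).1; omega⟩
      rw [show j + 2 - 2 = j from by omega, show j + 2 - 1 = j + 1 from by omega]
      ring
    rw [eval_eq_sum_range (p := T) (e * t * z), ← hndef, Finset.range_eq_Ico,
      Finset.sum_eq_sum_Ico_succ_bot (by omega), Finset.sum_eq_sum_Ico_succ_bot (by omega),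
      hkdef, eval_add, eval_add, eval_C, eval_X, eval_finset_sum]
    simp only [eval_mul, eval_C, eval_pow, eval_X]
    rw [hT0, hT1, ← ht, mul_add, mul_add, Finset.mul_sum, Finset.sum_congr rfl hsum]
    ring
  -- residue computations
  set σ := IsLocalRing.residue V with hσdef
  have hPm : P ≤ IsLocalRing.maximalIdeal V := IsLocalRing.le_maximalIdeal hP.ne_top
  have hσ0 : ∀ w : V, w ∈ IsLocalRing.maximalIdeal V → σ w = 0 := fun w hw =>
    Ideal.Quotient.eq_zero_iff_mem.mpr hw
  have hmapk : k.map σ = 1 + X := by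
    ext j
    rw [coeff_map]
    match j with
    | 0 => rw [k0]; simp [coeff_one, coeff_X]
    | 1 => rw [k1]; simp [coeff_one, coeff_X]
    | (j + 2) =>
      rw [hσ0 _ (hPm (khi (j + 2) (by omega)))]
      simp [coeff_one, coeff_X]
  have hk0ne : k ≠ 0 := fun h => by simp [h] at k0
  have hmon : k.reverse.Monic := by
    show k.reverse.leadingCoeff = 1
    rw [reverse_leadingCoeff, trailingCoeff,
      show k.natTrailingDegree = 0 from natTrailingDegree_eq_zero.mpr
        (Or.inr (by rw [k0]; exact one_ne_zero)), k0]
  have hn'1 : 1 ≤ k.natDegree := le_natDegree_of_ne_zero (by rw [k1]; exact one_ne_zero)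
  obtain ⟨m', hm'⟩ : ∃ m', k.natDegree = m' + 1 := ⟨k.natDegree - 1, by omega⟩
  have hrev : k.reverse.map σ = X ^ (m' + 1) + X ^ m' := by
    rw [reverse, ← reflect_map, hmapk, reflect_add, reflect_one, ← pow_one (X : (IsLocalRing.ResidueField V)[X]),
      reflect_monomial, revAt_le (by omega), hm']
    norm_num
  have hσeval : ∀ p : Polynomial V, σ (p.eval (-1)) = (p.map σ).eval (-1) := by
    intro p
    rw [eval_map, show ((-1 : IsLocalRing.ResidueField V)) = σ (-1) by simp, eval₂_at_apply]
  have heval : k.reverse.eval (-1) ∈ IsLocalRing.maximalIdeal V := by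
    rw [← Ideal.Quotient.eq_zero_iff_mem]
    show σ _ = 0
    rw [hσeval, hrev, eval_add, eval_pow, eval_pow, eval_X, pow_succ]
    ring
  have hunit : IsUnit (k.reverse.derivative.eval (-1)) := by
    rw [← IsLocalRing.notMem_maximalIdeal]
    intro hmem
    have h0 : σ (k.reverse.derivative.eval (-1)) = 0 := hσ0 _ hmem
    rw [hσeval, ← derivative_map, hrev] at h0
    rw [derivative_add, derivative_X_pow, derivative_X_pow] at h0
    simp only [eval_add, eval_mul, eval_C, eval_pow, eval_X] at h0
    match m' with
    | 0 => norm_num at h0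
    | (l + 1) =>
      have : ((l + 1 + 1 : ℕ) : IsLocalRing.ResidueField V) * (-1) ^ (l + 1 + 1 - 1)
          + ((l + 1 : ℕ) : IsLocalRing.ResidueField V) * (-1) ^ (l + 1 - 1)
          = -(-1) ^ l := by
        push_cast
        rw [pow_succ]
        ring
      rw [this] at h0
      exact pow_ne_zero l (neg_ne_zero.mpr one_ne_zero) (neg_eq_zero.mp h0)
  obtain ⟨a, haroot, hamem⟩ := HenselianLocalRing.is_henselian k.reverse hmon (-1) heval hunit
  have haunit : IsUnit a := by
    rw [← IsLocalRing.notMem_maximalIdeal]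
    intro ha
    have h1 : (1 : V) ∈ IsLocalRing.maximalIdeal V := by
      have := Ideal.sub_mem _ hamem ha
      simpa using this
    exact (IsLocalRing.maximalIdeal.isMaximal V).ne_top (Ideal.eq_top_of_isUnit_mem _ h1 isUnit_one)
  obtain ⟨u, hu⟩ := haunit
  haveI : Invertible ((u⁻¹ : Vˣ) : V) := (u⁻¹).invertible
  have hz : k.eval ((u⁻¹ : Vˣ) : V) = 0 := by
    have h := eval₂_reverse_eq_zero_iff (RingHom.id V) ((u⁻¹ : Vˣ) : V) k
    rw [invOf_units, inv_inv, hu] at h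
    exact h.mp haroot
  refine ⟨e * t * ((u⁻¹ : Vˣ) : V), ?_, P.mul_mem_right _ (P.mul_mem_left e htP)⟩
  have : G.eval (y + e * t * ((u⁻¹ : Vˣ) : V)) = T.eval (e * t * ((u⁻¹ : Vˣ) : V)) := by
    rw [hTdef, Polynomial.taylor_eval, add_comm]
  rw [this, ← hkey, hz, mul_zero]

/-- Lifting lemma (Becker–Denef–Lipshitz–van den Dries / Moret-Bailly): let `V` be a
Henselian valuation ring, `P` a prime ideal of `V` with quotient map `π : V → V/P`, and
`A ⊆ V` a subring on which `π` is injective.  Let `g ∈ A[X]` be irreducible and separable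
over `Frac(A)`, and let `x ∈ V/P` be a root of `g` (via `π|_A`).  Then there is `x₁ ∈ V`
with `g(x₁) = 0` and `π(x₁) = x`; consequently the subring `A[x₁] ⊆ V` maps isomorphically
(bijectively) onto `A' = π(A)[x]` under `π`. -/
theorem lift_separable_root_henselian
    (V : Type*) [CommRing V] [IsDomain V] [ValuationRing V] [HenselianLocalRing V]
    (P : Ideal V) (hP : P.IsPrime)
    (A : Subring V)
    (hinj : ∀ a ∈ A, ∀ b ∈ A, Ideal.Quotient.mk P a = Ideal.Quotient.mk P b → a = b)
    (g : Polynomial A)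
    (hirr : Irreducible (g.map (algebraMap A (FractionRing A))))
    (hsep : (g.map (algebraMap A (FractionRing A))).Separable)
    (x : V ⧸ P)
    (hx : Polynomial.eval₂ ((Ideal.Quotient.mk P).comp A.subtype) x g = 0) :
    ∃ x₁ : V, Polynomial.eval₂ A.subtype x₁ g = 0 ∧ Ideal.Quotient.mk P x₁ = x ∧
      (Subring.closure ((A : Set V) ∪ {x₁})).map (Ideal.Quotient.mk P)
        = Subring.closure ((A.map (Ideal.Quotient.mk P) : Set (V ⧸ P)) ∪ {x}) ∧
      Set.InjOn (Ideal.Quotient.mk P) (Subring.closure ((A : Set V) ∪ {x₁})) := by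
  classical
  haveI := hP
  set π : V →+* V ⧸ P := Ideal.Quotient.mk P with hπdef
  set φ : A →+* V ⧸ P := π.comp A.subtype with hφdef
  have hφinj : Function.Injective φ := by
    intro a b h
    exact Subtype.ext (hinj a a.2 b b.2 h)
  -- separability: derivative does not vanish at x
  have hder : (derivative g).eval₂ φ x ≠ 0 := by
    refine aux_coprime_eval φ hφinj g (derivative g) x ?_ hx
    rw [← derivative_map]
    exact hsep
  -- lift x to y
  obtain ⟨y, hy⟩ := Ideal.Quotient.mk_surjective x
  have hπev : ∀ (p : Polynomial A) (v : V),
      π (p.eval₂ A.subtype v) = p.eval₂ φ (π v) := by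
    intro p v
    rw [hom_eval₂, hφdef]
  set G : Polynomial V := g.map A.subtype with hGdef
  have hGev : ∀ v : V, G.eval v = g.eval₂ A.subtype v := fun v => eval_map _ _
  have hGdev : ∀ v : V, G.derivative.eval v = (derivative g).eval₂ A.subtype v := by
    intro v
    rw [hGdef, derivative_map, eval_map]
  have hb : G.eval y ∈ P := by
    rw [← Ideal.Quotient.eq_zero_iff_mem]
    show π _ = 0
    rw [hGev, hπev, hy]
    exact hx
  have he : G.derivative.eval y ∉ P := by
    rw [← Ideal.Quotient.eq_zero_iff_mem]
    show ¬ π _ = 0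
    rw [hGdev, hπev, hy]
    exact hder
  obtain ⟨z, hz0, hzP⟩ := newton_lift P hP G y hb he
  have hroot : g.eval₂ A.subtype (y + z) = 0 := by rw [← hGev]; exact hz0
  have hπx1 : π (y + z) = x := by
    rw [map_add, hy, Ideal.Quotient.eq_zero_iff_mem.mpr hzP, add_zero]
  refine ⟨y + z, hroot, hπx1, ?_, ?_⟩
  · rw [RingHom.map_closure]
    congr 1
    rw [Set.image_union, Set.image_singleton, hπx1, ← Subring.coe_map]
  · have hmem : ∀ w ∈ Subring.closure ((A : Set V) ∪ {y + z}),
        ∃ p : Polynomial A, p.eval₂ A.subtype (y + z) = w := by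
      intro w hw
      induction hw using Subring.closure_induction with
      | mem v hv =>
        rcases hv with hv | hv
        · exact ⟨C ⟨v, hv⟩, eval₂_C _ _⟩
        · exact ⟨X, by rw [eval₂_X, Set.mem_singleton_iff.mp hv]⟩
      | zero => exact ⟨0, eval₂_zero _ _⟩
      | one => exact ⟨1, eval₂_one _ _⟩
      | add u v hu hv ihu ihv =>
        obtain ⟨p, hp⟩ := ihu
        obtain ⟨q, hq⟩ := ihv
        exact ⟨p + q, by rw [eval₂_add, hp, hq]⟩
      | neg u hu ihu =>
        obtain ⟨p, hp⟩ := ihu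
        exact ⟨-p, by rw [eval₂_neg, hp]⟩
      | mul u v hu hv ihu ihv =>
        obtain ⟨p, hp⟩ := ihu
        obtain ⟨q, hq⟩ := ihv
        exact ⟨p * q, by rw [eval₂_mul, hp, hq]⟩
    intro u hu v hv huv
    obtain ⟨p, hp⟩ := hmem u hu
    obtain ⟨q, hq⟩ := hmem v hv
    have h0 : (p - q).eval₂ A.subtype (y + z) = u - v := by rw [eval₂_sub, hp, hq]
    have h1 : (p - q).eval₂ φ x = 0 := by
      rw [← hπx1, ← hπev, h0, map_sub]
      rw [show π u = π v from huv, sub_self]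
    have h2 := aux_eval_zero A.subtype (fun a b h => Subtype.ext h) g (p - q)
      (aux_root_dvd φ hφinj g (p - q) hirr x hx h1) (y + z) hroot
    rw [h0] at h2
    exact sub_eq_zero.mp h2
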